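/- arXiv:1006.1350 — 5 statements merged into one kernel-verified Lean document; each statement's English description precedes it below -/
import Mathlib

section
/- Let X = (X₁,…,Xₙ) be a random vector on a probability space such that each marginal distribution function Fᵢ(t) = P(Xᵢ ≤ t) is continuous. Then there exists an n-copula C such that for all (x₁,…,xₙ) ∈ ℝⁿ, P(X₁ ≤ x₁, …, Xₙ ≤ xₙ) = C(F₁(x₁), …, Fₙ(xₙ)). (Existence part of Sklar's theorem for continuous marginals; the copula can be taken to be the joint distribution function of (F₁(X₁),…,Fₙ(Xₙ)).) -/
open MeasureTheory ProbabilityTheory Set Filter Topology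

section Aux

variable {Ω : Type*} [MeasureSpace Ω] [IsProbabilityMeasure (ℙ : Measure Ω)]

lemma sklar_F_props (X : Ω → ℝ) (hX : Measurable X) (F : ℝ → ℝ)
    (hFdef : ∀ t, F t = (ℙ {ω | X ω ≤ t}).toReal) :
    Monotone F ∧ (∀ t, 0 ≤ F t) ∧ (∀ t, F t ≤ 1) ∧
      Tendsto F atBot (𝓝 0) ∧ Tendsto F atTop (𝓝 1) := by
  have hm : IsProbabilityMeasure (Measure.map X ℙ) :=
    Measure.isProbabilityMeasure_map hX.aemeasurable
  have hFc : F = fun t => cdf (Measure.map X ℙ) t := by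
    funext t
    rw [hFdef, cdf_eq_real, measureReal_def, Measure.map_apply hX measurableSet_Iic]
    rfl
  refine ⟨?_, ?_, ?_, ?_, ?_⟩
  · rw [hFc]; exact monotone_cdf _
  · intro t; rw [hFc]; exact cdf_nonneg _ t
  · intro t; rw [hFc]; exact cdf_le_one _ t
  · rw [hFc]; exact tendsto_cdf_atBot _
  · rw [hFc]; exact tendsto_cdf_atTop _

/-- Core computation: for `0 ≤ u < 1`, `ℙ (F ∘ X ≤ u) = u`. -/
lemma sklar_core (X : Ω → ℝ) (hX : Measurable X) (F : ℝ → ℝ)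
    (hFdef : ∀ t, F t = (ℙ {ω | X ω ≤ t}).toReal)
    (hFcont : Continuous F) {u : ℝ} (_hu0 : 0 ≤ u) (hu1 : u < 1) :
    ℙ {ω | F (X ω) ≤ u} = ENNReal.ofReal u := by
  obtain ⟨hmono, hF0, hF1, hbot, htop⟩ := sklar_F_props X hX F hFdef
  set A : Set ℝ := {s | F s ≤ u} with hA
  by_cases hne : A.Nonempty
  · -- A is bounded above
    obtain ⟨B, hB⟩ := eventually_atTop.mp (htop.eventually (eventually_gt_nhds hu1))
    have hbdd : BddAbove A := ⟨B, fun a ha => by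
      by_contra h
      exact absurd ha (not_le.mpr (hB a (le_of_not_ge h)))⟩
    have hclosed : IsClosed A := isClosed_Iic.preimage hFcont
    have hmem : sSup A ∈ A := hclosed.csSup_mem hne hbdd
    have hFt : F (sSup A) ≤ u := hmem
    have hFge : u ≤ F (sSup A) := by
      have htendsto : Tendsto F (𝓝[>] (sSup A)) (𝓝 (F (sSup A))) :=
        (hFcont.continuousAt).continuousWithinAt
      refine ge_of_tendsto htendsto ?_
      filter_upwards [self_mem_nhdsWithin] with s hs
      by_contra h
      exact absurd (le_csSup hbdd (le_of_not_ge h : F s ≤ u)) (not_le.mpr hs)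
    have hFeq : F (sSup A) = u := le_antisymm hFt hFge
    have hset : {ω | F (X ω) ≤ u} = {ω | X ω ≤ sSup A} := by
      ext ω
      constructor
      · intro h; exact le_csSup hbdd h
      · intro h; exact le_trans (hmono h) hFt
    rw [hset, ← hFeq, hFdef]
    exact (ENNReal.ofReal_toReal (measure_ne_top _ _)).symm
  · -- A empty forces u ≤ 0, hence u = 0
    have hu : u ≤ 0 := by
      by_contra h
      obtain ⟨s, hs⟩ := (hbot.eventually (eventually_lt_nhds (lt_of_not_ge h))).exists
      exact hne ⟨s, le_of_lt hs⟩
    have hset : {ω | F (X ω) ≤ u} = (∅ : Set Ω) := by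
      ext ω
      simp only [mem_setOf_eq, mem_empty_iff_false, iff_false]
      intro h
      exact hne ⟨X ω, h⟩
    rw [hset]
    simp [ENNReal.ofReal_eq_zero.mpr hu]

/-- `F ∘ X` is uniformly distributed on `[0,1]`. -/
lemma sklar_uniform (X : Ω → ℝ) (hX : Measurable X) (F : ℝ → ℝ)
    (hFdef : ∀ t, F t = (ℙ {ω | X ω ≤ t}).toReal)
    (hFcont : Continuous F) :
    Measure.map (fun ω => F (X ω)) ℙ = volume.restrict (Set.Icc (0:ℝ) 1) := by
  obtain ⟨hmono, hF0, hF1, hbot, htop⟩ := sklar_F_props X hX F hFdef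
  have hFm : Measurable fun ω => F (X ω) := hFcont.measurable.comp hX
  have : IsProbabilityMeasure (Measure.map (fun ω => F (X ω)) ℙ) :=
    Measure.isProbabilityMeasure_map hFm.aemeasurable
  refine Measure.ext_of_Iic _ _ fun u => ?_
  rw [Measure.map_apply hFm measurableSet_Iic, Measure.restrict_apply measurableSet_Iic]
  rcases lt_or_ge u 0 with h | h
  · have h1 : (fun ω => F (X ω)) ⁻¹' Iic u = ∅ := by
      ext ω; simp only [mem_preimage, mem_Iic, mem_empty_iff_false, iff_false]
      exact fun hc => absurd (le_trans (hF0 (X ω)) hc) (not_le.mpr h)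
    have h2 : Iic u ∩ Icc (0:ℝ) 1 = ∅ := by
      ext s; simp only [mem_inter_iff, mem_Iic, mem_Icc, mem_empty_iff_false, iff_false]
      rintro ⟨hs, hs0, -⟩
      exact absurd (le_trans hs0 hs) (not_le.mpr h)
    rw [h1, h2]; simp
  rcases lt_or_ge u 1 with h1 | h1
  · have hLHS : (fun ω => F (X ω)) ⁻¹' Iic u = {ω | F (X ω) ≤ u} := rfl
    rw [hLHS, sklar_core X hX F hFdef hFcont h h1]
    have h2 : Iic u ∩ Icc (0:ℝ) 1 = Icc 0 u := by
      ext s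
      simp only [mem_inter_iff, mem_Iic, mem_Icc]
      constructor
      · rintro ⟨hs, hs0, -⟩; exact ⟨hs0, hs⟩
      · rintro ⟨hs0, hs⟩; exact ⟨hs, hs0, le_trans hs (le_of_lt h1)⟩
    rw [h2, Real.volume_Icc, sub_zero]
  · have hLHS : (fun ω => F (X ω)) ⁻¹' Iic u = univ := by
      ext ω; simp only [mem_preimage, mem_Iic, mem_univ, iff_true]
      exact le_trans (hF1 (X ω)) h1
    have h2 : Iic u ∩ Icc (0:ℝ) 1 = Icc 0 1 := by
      ext s
      simp only [mem_inter_iff, mem_Iic, mem_Icc]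
      exact ⟨fun ⟨_, h⟩ => h, fun hs => ⟨le_trans hs.2 h1, hs⟩⟩
    rw [hLHS, h2, Real.volume_Icc]
    simp

/-- `ℙ (F(X) ≤ F(x)) = ℙ (X ≤ x)`. -/
lemma sklar_ae (X : Ω → ℝ) (hX : Measurable X) (F : ℝ → ℝ)
    (hFdef : ∀ t, F t = (ℙ {ω | X ω ≤ t}).toReal)
    (hFcont : Continuous F) (x : ℝ) :
    ℙ {ω | F (X ω) ≤ F x} = ℙ {ω | X ω ≤ x} := by
  obtain ⟨hmono, hF0, hF1, hbot, htop⟩ := sklar_F_props X hX F hFdef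
  rcases lt_or_ge (F x) 1 with h1 | h1
  · rw [sklar_core X hX F hFdef hFcont (hF0 x) h1, hFdef]
    exact ENNReal.ofReal_toReal (measure_ne_top _ _)
  · have hx1 : F x = 1 := le_antisymm (hF1 x) h1
    have hLHS : {ω | F (X ω) ≤ F x} = univ := by
      ext ω; simp only [mem_setOf_eq, mem_univ, iff_true, hx1]
      exact hF1 (X ω)
    have hRHS : ℙ {ω | X ω ≤ x} = 1 := by
      have := hFdef x
      rw [hx1] at this
      exact (ENNReal.toReal_eq_one_iff _).mp this.symm
    rw [hLHS, hRHS, measure_univ]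

end Aux

/-- **Existence part of Sklar's theorem for continuous marginals.**
If `X = (X₁, …, Xₙ)` is a random vector whose marginal distribution functions
`Fᵢ(t) = P(Xᵢ ≤ t)` are all continuous, then there exists an `n`-copula `C`
(the joint distribution function of a probability measure on `[0,1]ⁿ` with uniform
marginals) such that `P(X₁ ≤ x₁, …, Xₙ ≤ xₙ) = C(F₁(x₁), …, Fₙ(xₙ))` for all `x`. -/
theorem sklar_existence
    {Ω : Type*} [MeasureSpace Ω] [IsProbabilityMeasure (ℙ : Measure Ω)]
    {n : ℕ} (X : Fin n → Ω → ℝ) (hX : ∀ i, Measurable (X i))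
    (F : Fin n → ℝ → ℝ)
    (hFdef : ∀ i t, F i t = (ℙ {ω | X i ω ≤ t}).toReal)
    (hFcont : ∀ i, Continuous (F i)) :
    ∃ μ : Measure (Fin n → ℝ), IsProbabilityMeasure μ ∧
      (∀ i, Measure.map (fun v => v i) μ = volume.restrict (Set.Icc (0:ℝ) 1)) ∧
      ∀ x : Fin n → ℝ,
        ℙ {ω | ∀ i, X i ω ≤ x i} = μ {v | ∀ i, v i ≤ F i (x i)} := by
  have hYi : ∀ i, Measurable fun ω => F i (X i ω) :=
    fun i => (hFcont i).measurable.comp (hX i)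
  set Y : Ω → (Fin n → ℝ) := fun ω i => F i (X i ω) with hYdef
  have hYm : Measurable Y := measurable_pi_lambda _ hYi
  have hmono : ∀ i, Monotone (F i) :=
    fun i => (sklar_F_props (X i) (hX i) (F i) (hFdef i)).1
  refine ⟨Measure.map Y ℙ, Measure.isProbabilityMeasure_map hYm.aemeasurable, fun i => ?_, fun x => ?_⟩
  · rw [Measure.map_map (measurable_pi_apply i) hYm]
    exact sklar_uniform (X i) (hX i) (F i) (hFdef i) (hFcont i)
  · have hS : MeasurableSet {v : Fin n → ℝ | ∀ i, v i ≤ F i (x i)} := by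
      have : {v : Fin n → ℝ | ∀ i, v i ≤ F i (x i)} = ⋂ i, {v | v i ≤ F i (x i)} := by
        ext v; simp [mem_iInter]
      rw [this]
      exact MeasurableSet.iInter fun i =>
        measurableSet_le (measurable_pi_apply i) measurable_const
    rw [Measure.map_apply hYm hS]
    have hpre : Y ⁻¹' {v : Fin n → ℝ | ∀ i, v i ≤ F i (x i)} =
        {ω | ∀ i, F i (X i ω) ≤ F i (x i)} := rfl
    rw [hpre]
    -- two-sided inequality
    have hsub : {ω | ∀ i, X i ω ≤ x i} ⊆ {ω | ∀ i, F i (X i ω) ≤ F i (x i)} :=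
      fun ω hω i => hmono i (hω i)
    refine le_antisymm (measure_mono hsub) ?_
    have hnull : ∀ i,
        ℙ ({ω | F i (X i ω) ≤ F i (x i)} \ {ω | X i ω ≤ x i}) = 0 := by
      intro i
      have hsub' : {ω | X i ω ≤ x i} ⊆ {ω | F i (X i ω) ≤ F i (x i)} :=
        fun ω hω => hmono i hω
      have hBm : NullMeasurableSet {ω | X i ω ≤ x i} (ℙ : Measure Ω) :=
        (measurableSet_le (hX i) measurable_const).nullMeasurableSet
      rw [measure_diff hsub' hBm (measure_ne_top _ _),
        sklar_ae (X i) (hX i) (F i) (hFdef i) (hFcont i) (x i), tsub_self]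
    have hcover : {ω | ∀ i, F i (X i ω) ≤ F i (x i)} ⊆ {ω | ∀ i, X i ω ≤ x i} ∪
        ⋃ i, ({ω | F i (X i ω) ≤ F i (x i)} \ {ω | X i ω ≤ x i}) := by
      intro ω hω
      by_cases h : ∀ i, X i ω ≤ x i
      · exact Or.inl h
      · push_neg at h
        obtain ⟨i, hi⟩ := h
        exact Or.inr (mem_iUnion.mpr ⟨i, hω i, not_le.mpr hi⟩)
    calc ℙ {ω | ∀ i, F i (X i ω) ≤ F i (x i)}
        ≤ ℙ ({ω | ∀ i, X i ω ≤ x i} ∪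
            ⋃ i, ({ω | F i (X i ω) ≤ F i (x i)} \ {ω | X i ω ≤ x i})) :=
          measure_mono hcover
      _ ≤ ℙ {ω | ∀ i, X i ω ≤ x i} +
            ℙ (⋃ i, ({ω | F i (X i ω) ≤ F i (x i)} \ {ω | X i ω ≤ x i})) :=
          measure_union_le _ _
      _ = ℙ {ω | ∀ i, X i ω ≤ x i} := by
          rw [measure_iUnion_null hnull, add_zero]
end

section
/- Let X = (X₁,…,Xₙ) be a random vector whose marginal distribution functions Fᵢ(t) = P(Xᵢ ≤ t) are all continuous, and suppose C and C′ are two n-copulas satisfying P(X₁ ≤ x₁,…,Xₙ ≤ xₙ) = C(F₁(x₁),…,Fₙ(xₙ)) = C′(F₁(x₁),…,Fₙ(xₙ)) for all (x₁,…,xₙ) ∈ ℝⁿ. Then C(u) = C′(u) for all u ∈ [0,1]ⁿ. (Uniqueness part of Sklar's theorem for continuous marginals.) -/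
open MeasureTheory ProbabilityTheory Set Filter Topology

private lemma sklar_marginal_null {n : ℕ} (ν : Measure (Fin n → ℝ))
    (i : Fin n) (hν : Measure.map (fun v => v i) ν = volume.restrict (Set.Icc (0:ℝ) 1))
    {s : Set ℝ} (hs : MeasurableSet s) (h0 : volume (s ∩ Set.Icc (0:ℝ) 1) = 0) :
    ν {v | v i ∈ s} = 0 := by
  have hmap := Measure.map_apply (μ := ν) (measurable_pi_apply i) hs
  rw [hν, Measure.restrict_apply hs, h0] at hmap
  exact hmap.symm

/-- **Uniqueness part of Sklar's theorem for continuous marginals.**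
If `X = (X₁, …, Xₙ)` is a random vector whose marginal distribution functions
`Fᵢ(t) = P(Xᵢ ≤ t)` are all continuous, and `C`, `C′` are two `n`-copulas
(joint distribution functions of probability measures `μ`, `μ′` on `[0,1]ⁿ`
with uniform marginals) satisfying
`P(X₁ ≤ x₁, …, Xₙ ≤ xₙ) = C(F₁(x₁), …, Fₙ(xₙ)) = C′(F₁(x₁), …, Fₙ(xₙ))`
for all `x ∈ ℝⁿ`, then `C = C′` on `[0,1]ⁿ`. -/
theorem sklar_uniqueness
    {Ω : Type*} [MeasureSpace Ω] [IsProbabilityMeasure (ℙ : Measure Ω)]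
    {n : ℕ} (X : Fin n → Ω → ℝ) (hX : ∀ i, Measurable (X i))
    (F : Fin n → ℝ → ℝ)
    (hFdef : ∀ i t, F i t = (ℙ {ω | X i ω ≤ t}).toReal)
    (hFcont : ∀ i, Continuous (F i))
    (μ μ' : Measure (Fin n → ℝ)) [IsProbabilityMeasure μ] [IsProbabilityMeasure μ']
    (hμ : ∀ i, Measure.map (fun v => v i) μ = volume.restrict (Set.Icc (0:ℝ) 1))
    (hμ' : ∀ i, Measure.map (fun v => v i) μ' = volume.restrict (Set.Icc (0:ℝ) 1))
    (h : ∀ x : Fin n → ℝ, ℙ {ω | ∀ i, X i ω ≤ x i} = μ {v | ∀ i, v i ≤ F i (x i)})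
    (h' : ∀ x : Fin n → ℝ, ℙ {ω | ∀ i, X i ω ≤ x i} = μ' {v | ∀ i, v i ≤ F i (x i)}) :
    ∀ u : Fin n → ℝ, (∀ i, u i ∈ Set.Icc (0:ℝ) 1) →
      μ {v | ∀ i, v i ≤ u i} = μ' {v | ∀ i, v i ≤ u i} := by
  -- Step 1: the case where all coordinates are in the open interval (0,1).
  have key : ∀ u : Fin n → ℝ, (∀ i, u i ∈ Set.Ioo (0:ℝ) 1) →
      μ {v | ∀ i, v i ≤ u i} = μ' {v | ∀ i, v i ≤ u i} := by
    intro u hu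
    have hx : ∀ i, ∃ x, F i x = u i := by
      intro i
      have hprob : IsProbabilityMeasure (Measure.map (X i) ℙ) :=
        Measure.isProbabilityMeasure_map (hX i).aemeasurable
      have hFi : F i = cdf (Measure.map (X i) ℙ) := by
        funext t
        rw [hFdef, cdf_eq_real, measureReal_def, Measure.map_apply (hX i) measurableSet_Iic]
        rfl
      have htop : Tendsto (F i) atTop (𝓝 1) := hFi ▸ tendsto_cdf_atTop _
      have hbot : Tendsto (F i) atBot (𝓝 0) := hFi ▸ tendsto_cdf_atBot _
      obtain ⟨a, ha⟩ : ∃ a, F i a ≤ u i := (hbot.eventually_le_const (hu i).1).exists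
      obtain ⟨b, hb⟩ : ∃ b, u i ≤ F i b := (htop.eventually_const_le (hu i).2).exists
      rcases le_total a b with hab | hab
      · obtain ⟨x, -, hx⟩ := intermediate_value_Icc hab (hFcont i).continuousOn ⟨ha, hb⟩
        exact ⟨x, hx⟩
      · obtain ⟨x, -, hx⟩ := intermediate_value_Icc' hab (hFcont i).continuousOn ⟨ha, hb⟩
        exact ⟨x, hx⟩
    choose x hxF using hx
    have h1 := (h x).symm.trans (h' x)
    simpa only [hxF] using h1
  intro u hu
  by_cases h0 : ∃ i, u i = 0
  · -- some coordinate is 0: both sides vanish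
    obtain ⟨i, hi⟩ := h0
    have hsub : {v : Fin n → ℝ | ∀ j, v j ≤ u j} ⊆ {v | v i ∈ Iic (0:ℝ)} := by
      intro v hv
      have := hv i
      simpa [hi] using this
    have hz : volume (Iic (0:ℝ) ∩ Icc 0 1) = 0 := by
      have hss : Iic (0:ℝ) ∩ Icc 0 1 ⊆ {0} := by
        rintro y ⟨hy1, hy2, -⟩
        exact le_antisymm hy1 hy2
      exact measure_mono_null hss Real.volume_singleton
    rw [measure_mono_null hsub (sklar_marginal_null μ i (hμ i) measurableSet_Iic hz),
        measure_mono_null hsub (sklar_marginal_null μ' i (hμ' i) measurableSet_Iic hz)]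
  · push_neg at h0
    have hupos : ∀ i, 0 < u i := fun i => lt_of_le_of_ne (hu i).1 (Ne.symm (h0 i))
    -- the approximating sequence
    set s : ℕ → Set (Fin n → ℝ) :=
      fun k => {v | ∀ i, v i ≤ min (u i) (1 - 1 / ((k : ℝ) + 2))} with hs
    have hkmono : ∀ k l : ℕ, k ≤ l →
        (1 - 1 / ((k : ℝ) + 2)) ≤ (1 - 1 / ((l : ℝ) + 2)) := by
      intro k l hkl
      have hc : (k : ℝ) ≤ (l : ℝ) := Nat.cast_le.mpr hkl
      have : (1 : ℝ) / ((l : ℝ) + 2) ≤ 1 / ((k : ℝ) + 2) :=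
        one_div_le_one_div_of_le (by positivity) (by linarith)
      linarith
    have hmono : Monotone s := by
      intro k l hkl v hv i
      exact le_trans (hv i) (min_le_min le_rfl (hkmono k l hkl))
    have hlt1 : ∀ k : ℕ, (1 - 1 / ((k : ℝ) + 2)) < 1 := by
      intro k
      have : (0:ℝ) < 1 / ((k : ℝ) + 2) := by positivity
      linarith
    have hgt0 : ∀ k : ℕ, (0:ℝ) < 1 - 1 / ((k : ℝ) + 2) := by
      intro k
      have h2 : (1:ℝ) / ((k : ℝ) + 2) < 1 := by
        rw [div_lt_one (by positivity)]
        have : (0:ℝ) ≤ (k : ℝ) := Nat.cast_nonneg k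
        linarith
      linarith
    have hks : ∀ k, μ (s k) = μ' (s k) := by
      intro k
      refine key _ fun i => ⟨lt_min (hupos i) (hgt0 k), ?_⟩
      exact lt_of_le_of_lt (min_le_right _ _) (hlt1 k)
    -- the limit set
    have hUnion : μ (⋃ k, s k) = μ' (⋃ k, s k) := by
      refine tendsto_nhds_unique (tendsto_measure_iUnion_atTop hmono) ?_
      have h2 := tendsto_measure_iUnion_atTop (μ := μ') hmono
      have : (μ ∘ s) = (μ' ∘ s) := funext fun k => hks k
      rw [this]
      exact h2
    -- relate μ S_u with μ (⋃ k, s k) for each of the two measures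
    have habs : ∀ (ν : Measure (Fin n → ℝ)),
        (∀ i, Measure.map (fun v => v i) ν = volume.restrict (Set.Icc (0:ℝ) 1)) →
        ν {v | ∀ i, v i ≤ u i} = ν (⋃ k, s k) := by
      intro ν hν
      have hsubU : (⋃ k, s k) ⊆ {v | ∀ i, v i ≤ u i} := by
        rintro v ⟨_, ⟨k, rfl⟩, hv⟩ i
        exact le_trans (hv i) (min_le_left _ _)
      have hDnull : ν (⋃ i, {v : Fin n → ℝ | v i ∈ ({1} : Set ℝ)}) = 0 := by
        refine measure_iUnion_null fun i => sklar_marginal_null ν i (hν i)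
          (measurableSet_singleton 1) ?_
        exact measure_mono_null (inter_subset_left) Real.volume_singleton
      refine le_antisymm ?_ (measure_mono hsubU)
      have hcover : {v : Fin n → ℝ | ∀ i, v i ≤ u i} ⊆
          (⋃ k, s k) ∪ ⋃ i, {v : Fin n → ℝ | v i ∈ ({1} : Set ℝ)} := by
        intro v hv
        by_cases hv1 : ∀ i, v i < 1
        · left
          -- find k working for all coordinates
          have hex : ∀ i, ∃ k : ℕ, v i ≤ 1 - 1 / ((k : ℝ) + 2) := by
            intro i
            obtain ⟨k, hk⟩ := exists_nat_gt (1 / (1 - v i))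
            refine ⟨k, ?_⟩
            have hpos : (0:ℝ) < 1 - v i := by linarith [hv1 i]
            have hk2 : 1 / (1 - v i) < (k : ℝ) + 2 := by linarith
            have := (div_lt_iff₀ hpos).mp hk2
            have h1 : 1 / ((k : ℝ) + 2) < 1 - v i := by
              rw [div_lt_iff₀ (by positivity)]
              nlinarith
            linarith
          choose k hk using hex
          rcases isEmpty_or_nonempty (Fin n) with hempty | hne
          · exact mem_iUnion.mpr ⟨0, fun i => absurd i.isLt (by simp [hempty.false i])⟩
          · obtain ⟨K, hK⟩ := Finset.exists_le (Finset.univ.image k)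
            refine mem_iUnion.mpr ⟨K, fun i => le_min (hv i) ?_⟩
            have hkiK : k i ≤ K := hK _ (Finset.mem_image_of_mem k (Finset.mem_univ i))
            exact le_trans (hk i) (hkmono (k i) K hkiK)
        · right
          push_neg at hv1
          obtain ⟨i, hi⟩ := hv1
          refine mem_iUnion.mpr ⟨i, ?_⟩
          have : v i ≤ 1 := le_trans (hv i) (hu i).2
          exact le_antisymm this hi
      calc ν {v | ∀ i, v i ≤ u i}
          ≤ ν ((⋃ k, s k) ∪ ⋃ i, {v : Fin n → ℝ | v i ∈ ({1} : Set ℝ)}) :=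
            measure_mono hcover
        _ ≤ ν (⋃ k, s k) + ν (⋃ i, {v : Fin n → ℝ | v i ∈ ({1} : Set ℝ)}) :=
            measure_union_le _ _
        _ = ν (⋃ k, s k) := by rw [hDnull, add_zero]
    rw [habs μ hμ, habs μ' hμ', hUnion]
end

section
/- Let C be an n-copula with underlying probability measure μ on [0,1]ⁿ, and let F₁,…,Fₙ be the cumulative distribution functions of probability measures ν₁,…,νₙ on ℝ. Then there exists a probability measure H on ℝⁿ whose i-th coordinate marginal is νᵢ for every i, and whose joint distribution function satisfies H((-∞,x₁] × ⋯ × (-∞,xₙ]) = C(F₁(x₁),…,Fₙ(xₙ)) for all (x₁,…,xₙ) ∈ ℝⁿ. (Converse part of Sklar's theorem.) -/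
open MeasureTheory ProbabilityTheory Set

open Filter Topology

noncomputable def sklarQ (ν : Measure ℝ) (p : ℝ) : ℝ := sInf {x | p ≤ cdf ν x}

lemma sklarQ_le_iff (ν : Measure ℝ) [IsProbabilityMeasure ν] {p : ℝ}
    (hp0 : 0 < p) (hp1 : p < 1) (x : ℝ) : sklarQ ν p ≤ x ↔ p ≤ cdf ν x := by
  set S : Set ℝ := {t | p ≤ cdf ν t} with hS
  obtain ⟨b, hb⟩ : ∃ b, p ≤ cdf ν b := by
    have := ((tendsto_cdf_atTop ν).eventually_const_lt hp1).exists
    exact ⟨this.choose, this.choose_spec.le⟩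
  have hne : S.Nonempty := ⟨b, hb⟩
  obtain ⟨a, ha⟩ : ∃ a, cdf ν a < p := ((tendsto_cdf_atBot ν).eventually_lt_const hp0).exists
  have hbdd : BddBelow S := by
    refine ⟨a, fun t ht => ?_⟩
    by_contra hlt
    push_neg at hlt
    exact absurd (ht.trans (monotone_cdf ν hlt.le)) (not_le.mpr ha)
  constructor
  · intro h
    have key : p ≤ cdf ν (sInf S) := by
      have htend : Tendsto (cdf ν) (𝓝[>] (sInf S)) (𝓝 (cdf ν (sInf S))) :=
        ((cdf ν).right_continuous (sInf S)).tendsto.mono_left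
          (nhdsWithin_mono _ Ioi_subset_Ici_self)
      refine ge_of_tendsto htend ?_
      filter_upwards [self_mem_nhdsWithin] with t ht
      obtain ⟨s, hsS, hst⟩ := exists_lt_of_csInf_lt hne ht
      have hps : p ≤ cdf ν s := hsS
      exact hps.trans (monotone_cdf ν hst.le)
    exact key.trans (monotone_cdf ν h)
  · intro h
    exact csInf_le hbdd h

noncomputable def sklarQ' (ν : Measure ℝ) (p : ℝ) : ℝ :=
  if p ∈ Ioo (0:ℝ) 1 then sklarQ ν p else 0

lemma measurable_sklarQ' (ν : Measure ℝ) [IsProbabilityMeasure ν] :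
    Measurable (sklarQ' ν) := by
  apply measurable_of_Iic
  intro x
  have : sklarQ' ν ⁻¹' Iic x =
      (Ioo (0:ℝ) 1 ∩ Iic (cdf ν x)) ∪ ((Ioo (0:ℝ) 1)ᶜ ∩ {p | (0:ℝ) ≤ x}) := by
    ext p
    simp only [mem_preimage, mem_Iic, sklarQ', mem_union, mem_inter_iff, mem_compl_iff,
      mem_setOf_eq]
    by_cases hp : p ∈ Ioo (0:ℝ) 1
    · simp [hp, sklarQ_le_iff ν hp.1 hp.2 x]
    · simp [hp]
  rw [this]
  by_cases h0 : (0:ℝ) ≤ x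
  · simp only [h0]
    exact (measurableSet_Ioo.inter measurableSet_Iic).union
      (measurableSet_Ioo.compl.inter (by simp [setOf_true]))
  · simp only [h0]
    exact (measurableSet_Ioo.inter measurableSet_Iic).union
      (measurableSet_Ioo.compl.inter (by simp [setOf_false]))

lemma sklarQ'_map (ν : Measure ℝ) [IsProbabilityMeasure ν] :
    Measure.map (sklarQ' ν) (volume.restrict (Icc (0:ℝ) 1)) = ν := by
  have hmeas := measurable_sklarQ' ν
  have hprob : IsProbabilityMeasure (volume.restrict (Icc (0:ℝ) 1)) := by
    constructor; simp [Real.volume_Icc]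
  have : IsProbabilityMeasure (Measure.map (sklarQ' ν) (volume.restrict (Icc (0:ℝ) 1))) :=
    Measure.isProbabilityMeasure_map hmeas.aemeasurable
  refine Measure.ext_of_Iic _ _ (fun x => ?_)
  rw [Measure.map_apply hmeas measurableSet_Iic, Measure.restrict_apply (hmeas measurableSet_Iic),
    ← ofReal_cdf ν x]
  set c := cdf ν x with hc
  have hc0 : 0 ≤ c := cdf_nonneg ν x
  have hc1 : c ≤ 1 := cdf_le_one ν x
  apply le_antisymm
  · have hsub : sklarQ' ν ⁻¹' Iic x ∩ Icc 0 1 ⊆ Ioc 0 c ∪ ({0, 1} : Set ℝ) := by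
      rintro p ⟨hpx, hp0, hp1⟩
      rcases eq_or_lt_of_le hp0 with h | h
      · exact Or.inr (Or.inl h.symm)
      rcases eq_or_lt_of_le hp1 with h' | h'
      · exact Or.inr (Or.inr h')
      have hin : p ∈ Ioo (0:ℝ) 1 := ⟨h, h'⟩
      have : sklarQ ν p ≤ x := by simpa [sklarQ', hin] using hpx
      exact Or.inl ⟨h, (sklarQ_le_iff ν hin.1 hin.2 x).mp this⟩
    calc volume (sklarQ' ν ⁻¹' Iic x ∩ Icc 0 1) ≤ volume (Ioc 0 c ∪ ({0,1} : Set ℝ)) :=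
          measure_mono hsub
      _ ≤ volume (Ioc 0 c) + volume ({0,1} : Set ℝ) := measure_union_le _ _
      _ = ENNReal.ofReal c := by
          rw [((finite_singleton (1:ℝ)).insert 0).measure_zero volume, add_zero,
            Real.volume_Ioc, sub_zero]
  · have hsub : Ioo 0 c ⊆ sklarQ' ν ⁻¹' Iic x ∩ Icc 0 1 := by
      rintro p ⟨hp0, hpc⟩
      have hin : p ∈ Ioo (0:ℝ) 1 := ⟨hp0, lt_of_lt_of_le hpc hc1⟩
      refine ⟨?_, hp0.le, hin.2.le⟩
      simp only [mem_preimage, mem_Iic, sklarQ', hin, if_true]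
      exact (sklarQ_le_iff ν hin.1 hin.2 x).mpr hpc.le
    calc ENNReal.ofReal c = volume (Ioo 0 c) := by rw [Real.volume_Ioo, sub_zero]
      _ ≤ _ := measure_mono hsub

/-- **Converse part of Sklar's theorem.**
If `C` is an `n`-copula (the joint distribution function of a probability measure `μ`
on `[0,1]ⁿ` with uniform marginals) and `F₁, …, Fₙ` are the cumulative distribution
functions of probability measures `ν₁, …, νₙ` on `ℝ`, then there exists a probability
measure `H` on `ℝⁿ` whose `i`-th coordinate marginal is `νᵢ` for each `i` and whose
joint distribution function is `H((-∞,x₁] × ⋯ × (-∞,xₙ]) = C(F₁(x₁), …, Fₙ(xₙ))`. -/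
theorem sklar_converse
    {n : ℕ} (μ : Measure (Fin n → ℝ)) [IsProbabilityMeasure μ]
    (hμ : ∀ i, Measure.map (fun v => v i) μ = volume.restrict (Set.Icc (0:ℝ) 1))
    (ν : Fin n → Measure ℝ) [∀ i, IsProbabilityMeasure (ν i)]
    (F : Fin n → ℝ → ℝ) (hF : ∀ i t, F i t = (ν i (Set.Iic t)).toReal) :
    ∃ H : Measure (Fin n → ℝ), IsProbabilityMeasure H ∧
      (∀ i, Measure.map (fun v => v i) H = ν i) ∧
      ∀ x : Fin n → ℝ, H {v | ∀ i, v i ≤ x i} = μ {v | ∀ i, v i ≤ F i (x i)} := by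
  have hFc : ∀ i t, F i t = cdf (ν i) t := fun i t => by
    rw [hF i t, cdf_eq_real, measureReal_def]
  set G : (Fin n → ℝ) → (Fin n → ℝ) := fun v i => sklarQ' (ν i) (v i) with hG
  have hGmeas : Measurable G :=
    measurable_pi_iff.mpr fun i => (measurable_sklarQ' (ν i)).comp (measurable_pi_apply i)
  -- the bad set is null
  have hN : ∀ᵐ v ∂μ, ∀ i, v i ∈ Ioo (0:ℝ) 1 := by
    rw [ae_all_iff]
    intro i
    have : μ {v | v i ∉ Ioo (0:ℝ) 1} = 0 := by
      have hmi : μ ((fun v : Fin n → ℝ => v i) ⁻¹' (Ioo (0:ℝ) 1)ᶜ) =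
          (Measure.map (fun v => v i) μ) ((Ioo (0:ℝ) 1)ᶜ) :=
        (Measure.map_apply (measurable_pi_apply i) measurableSet_Ioo.compl).symm
      have hset : (Ioo (0:ℝ) 1)ᶜ ∩ Icc (0:ℝ) 1 ⊆ ({0, 1} : Set ℝ) := by
        rintro a ⟨ha, ha0, ha1⟩
        simp only [mem_compl_iff, mem_Ioo, not_and, not_lt] at ha
        rcases eq_or_lt_of_le ha0 with h | h
        · exact Or.inl h.symm
        · exact Or.inr (le_antisymm ha1 (ha h))
      have : (Measure.map (fun v => v i) μ) ((Ioo (0:ℝ) 1)ᶜ) = 0 := by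
        rw [hμ i, Measure.restrict_apply measurableSet_Ioo.compl]
        exact measure_mono_null hset (((finite_singleton (1:ℝ)).insert 0).measure_zero volume)
      exact hmi.trans this
    exact this
  refine ⟨μ.map G, Measure.isProbabilityMeasure_map hGmeas.aemeasurable, fun i => ?_, fun x => ?_⟩
  · rw [Measure.map_map (measurable_pi_apply i) hGmeas]
    have : (fun v : Fin n → ℝ => v i) ∘ G = sklarQ' (ν i) ∘ (fun v => v i) := rfl
    rw [this, ← Measure.map_map (measurable_sklarQ' (ν i)) (measurable_pi_apply i), hμ i,
      sklarQ'_map]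
  · have hAmeas : MeasurableSet {v : Fin n → ℝ | ∀ i, v i ≤ x i} := by
      rw [setOf_forall]
      exact MeasurableSet.iInter fun i => measurableSet_le (measurable_pi_apply i) measurable_const
    rw [Measure.map_apply hGmeas hAmeas]
    refine measure_congr ?_
    filter_upwards [hN] with v hv
    refine eq_iff_iff.mpr ?_
    show (∀ i, sklarQ' (ν i) (v i) ≤ x i) ↔ (∀ i, v i ≤ F i (x i))
    refine forall_congr' fun i => ?_
    have hin := hv i
    rw [hFc i (x i)]
    simp only [sklarQ', hin, if_true]
    exact sklarQ_le_iff (ν i) hin.1 hin.2 (x i)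
end

section
/- Let X = (X₁,…,Xₙ) be a random vector whose marginal distribution functions Fᵢ(t) = P(Xᵢ ≤ t) are all continuous, let H(x₁,…,xₙ) = P(X₁ ≤ x₁,…,Xₙ ≤ xₙ), and let C be the n-copula given by the joint distribution function of (F₁(X₁),…,Fₙ(Xₙ)). Then for all (u₁,…,uₙ) ∈ (0,1)ⁿ, C(u₁,…,uₙ) = H(F₁^{(-1)}(u₁),…,Fₙ^{(-1)}(uₙ)), where F^{(-1)}(u) = inf{x : F(x) ≥ u} is the quasi-inverse. -/
open MeasureTheory ProbabilityTheory Set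

/-- If `X = (X₁, …, Xₙ)` has continuous marginal distribution functions
`Fᵢ(t) = P(Xᵢ ≤ t)`, `H` is the joint distribution function of `X`, and `C` is the copula
given by the joint distribution function of `(F₁(X₁), …, Fₙ(Xₙ))`, then for all
`u ∈ (0,1)ⁿ`, `C(u₁, …, uₙ) = H(F₁⁽⁻¹⁾(u₁), …, Fₙ⁽⁻¹⁾(uₙ))`, where
`F⁽⁻¹⁾(u) = inf {x | F x ≥ u}` is the quasi-inverse. -/
theorem copula_eq_H_of_quasi_inverse
    {Ω : Type*} [MeasureSpace Ω] [IsProbabilityMeasure (ℙ : Measure Ω)]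
    {n : ℕ} (X : Fin n → Ω → ℝ) (hX : ∀ i, Measurable (X i))
    (F : Fin n → ℝ → ℝ)
    (hFdef : ∀ i t, F i t = (ℙ {ω | X i ω ≤ t}).toReal)
    (hFcont : ∀ i, Continuous (F i))
    (Finv : Fin n → ℝ → ℝ)
    (hFinv : ∀ i u, Finv i u = sInf {x | u ≤ F i x}) :
    ∀ u : Fin n → ℝ, (∀ i, u i ∈ Set.Ioo (0:ℝ) 1) →
      ℙ {ω | ∀ i, F i (X i ω) ≤ u i} = ℙ {ω | ∀ i, X i ω ≤ Finv i (u i)} := by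
  intro u hu
  -- distribution measures
  set μ : Fin n → Measure ℝ := fun i => Measure.map (X i) ℙ with hμdef
  have hμprob : ∀ i, IsProbabilityMeasure (μ i) := fun i =>
    Measure.isProbabilityMeasure_map (hX i).aemeasurable
  have hF : ∀ i t, F i t = (μ i (Iic t)).toReal := by
    intro i t
    rw [hFdef, hμdef]
    rw [Measure.map_apply (hX i) measurableSet_Iic]
    rfl
  have hFmono : ∀ i, Monotone (F i) := by
    intro i x y hxy
    rw [hF, hF]
    exact ENNReal.toReal_mono (measure_ne_top _ _)
      (measure_mono (Iic_subset_Iic.2 hxy))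
  have hFcdf : ∀ i, F i = cdf (μ i) := by
    intro i
    funext t
    rw [hF, cdf_eq_real, measureReal_def]
  have hFtop : ∀ i, Filter.Tendsto (F i) Filter.atTop (nhds 1) := by
    intro i; rw [hFcdf i]; exact tendsto_cdf_atTop (μ i)
  have hFbot : ∀ i, Filter.Tendsto (F i) Filter.atBot (nhds 0) := by
    intro i; rw [hFcdf i]; exact tendsto_cdf_atBot (μ i)
  set a : Fin n → ℝ := fun i => Finv i (u i) with hadef
  -- `F i (a i) = u i`
  have hT_ne : ∀ i, {x | u i ≤ F i x}.Nonempty := by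
    intro i
    have : ∀ᶠ x in Filter.atTop, u i ≤ F i x :=
      (hFtop i).eventually_const_le (hu i).2
    exact this.exists
  have hT_bdd : ∀ i, BddBelow {x | u i ≤ F i x} := by
    intro i
    have h : ∀ᶠ x in Filter.atBot, F i x < u i :=
      (hFbot i).eventually_lt_const (hu i).1
    obtain ⟨m, hm⟩ := Filter.eventually_atBot.1 h
    refine ⟨m, fun x hx => ?_⟩
    by_contra hxm
    exact absurd hx (not_le.2 (hm x (le_of_not_ge hxm)))
  have hT_closed : ∀ i, IsClosed {x | u i ≤ F i x} := fun i =>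
    isClosed_le continuous_const (hFcont i)
  have ha_mem : ∀ i, u i ≤ F i (a i) := by
    intro i
    have := (hT_closed i).csInf_mem (hT_ne i) (hT_bdd i)
    rw [hadef]
    simpa only [hFinv, mem_setOf_eq] using this
  have haF : ∀ i, F i (a i) = u i := by
    intro i
    refine le_antisymm ?_ (ha_mem i)
    by_contra h
    push_neg at h
    have hopen : (F i) ⁻¹' Ioi (u i) ∈ nhds (a i) :=
      (isOpen_Ioi.preimage (hFcont i)).mem_nhds h
    obtain ⟨l, r, hmem, hsub⟩ := mem_nhds_iff_exists_Ioo_subset.1 hopen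
    obtain ⟨x, hlx, hxa⟩ := exists_between hmem.1
    have hxV : x ∈ Ioo l r := ⟨hlx, lt_trans hxa hmem.2⟩
    have hx : x ∈ {y | u i ≤ F i y} := by
      have h2 : F i x ∈ Ioi (u i) := hsub hxV
      exact le_of_lt (mem_Ioi.1 h2)
    have : a i ≤ x := by
      rw [hadef]
      simpa only [hFinv] using csInf_le (hT_bdd i) hx
    exact absurd hxa (not_lt.2 this)
  -- the flat part: c i = sSup {x | F i x ≤ u i}
  set c : Fin n → ℝ := fun i => sSup {x | F i x ≤ u i} with hcdef
  have hS_ne : ∀ i, {x | F i x ≤ u i}.Nonempty := fun i => ⟨a i, le_of_eq (haF i)⟩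
  have hS_bdd : ∀ i, BddAbove {x | F i x ≤ u i} := by
    intro i
    by_contra hb
    have hforall : ∀ b : ℝ, F i b ≤ u i := by
      intro b
      obtain ⟨x, hx, hbx⟩ := not_bddAbove_iff.1 hb b
      exact le_trans (hFmono i (le_of_lt hbx)) hx
    have : (1:ℝ) ≤ u i := le_of_tendsto (hFtop i) (Filter.Eventually.of_forall hforall)
    exact absurd this (not_le.2 (hu i).2)
  have hS_closed : ∀ i, IsClosed {x | F i x ≤ u i} := fun i =>
    isClosed_le (hFcont i) continuous_const
  have hc_mem : ∀ i, F i (c i) ≤ u i := fun i =>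
    (hS_closed i).csSup_mem (hS_ne i) (hS_bdd i)
  have hac : ∀ i, a i ≤ c i := fun i => le_csSup (hS_bdd i) (le_of_eq (haF i))
  -- the flat interval is null
  have hnull : ∀ i, μ i (Ioc (a i) (c i)) = 0 := by
    intro i
    have hunion : Iic (a i) ∪ Ioc (a i) (c i) = Iic (c i) := Iic_union_Ioc_eq_Iic (hac i)
    have hdisj : Disjoint (Iic (a i)) (Ioc (a i) (c i)) := Iic_disjoint_Ioc le_rfl
    have hmeas : μ i (Iic (a i)) + μ i (Ioc (a i) (c i)) = μ i (Iic (c i)) := by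
      rw [← measure_union hdisj measurableSet_Ioc, hunion]
    have hFac : F i (c i) = F i (a i) := le_antisymm
      ((hc_mem i).trans (haF i).ge) (hFmono i (hac i))
    have hIic : μ i (Iic (a i)) = μ i (Iic (c i)) := by
      have := hFac
      rw [hF, hF] at this
      exact ((ENNReal.toReal_eq_toReal_iff' (measure_ne_top _ _) (measure_ne_top _ _)).1 this).symm
    rw [hIic] at hmeas
    nth_rewrite 2 [← add_zero (μ i (Iic (c i)))] at hmeas
    exact (ENNReal.add_right_inj (measure_ne_top _ _)).1 hmeas
  have hDnull : ∀ i, ℙ {ω | F i (X i ω) ≤ u i ∧ a i < X i ω} = 0 := by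
    intro i
    have hsub : {ω | F i (X i ω) ≤ u i ∧ a i < X i ω} ⊆ X i ⁻¹' Ioc (a i) (c i) := by
      intro ω ⟨h1, h2⟩
      exact ⟨h2, le_csSup (hS_bdd i) h1⟩
    have : ℙ (X i ⁻¹' Ioc (a i) (c i)) = 0 := by
      have := hnull i
      rwa [hμdef, Measure.map_apply (hX i) measurableSet_Ioc] at this
    exact measure_mono_null hsub this
  -- conclude
  refine le_antisymm ?_ (measure_mono ?_)
  · have hsub : {ω | ∀ i, F i (X i ω) ≤ u i} ⊆
        {ω | ∀ i, X i ω ≤ Finv i (u i)} ∪ ⋃ i, {ω | F i (X i ω) ≤ u i ∧ a i < X i ω} := by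
      intro ω hω
      by_cases hB : ∀ i, X i ω ≤ a i
      · exact Or.inl hB
      · push_neg at hB
        obtain ⟨i, hi⟩ := hB
        exact Or.inr (mem_iUnion.2 ⟨i, hω i, hi⟩)
    calc ℙ {ω | ∀ i, F i (X i ω) ≤ u i}
        ≤ ℙ ({ω | ∀ i, X i ω ≤ Finv i (u i)} ∪ ⋃ i, {ω | F i (X i ω) ≤ u i ∧ a i < X i ω}) :=
          measure_mono hsub
      _ ≤ ℙ {ω | ∀ i, X i ω ≤ Finv i (u i)} + ℙ (⋃ i, {ω | F i (X i ω) ≤ u i ∧ a i < X i ω}) :=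
          measure_union_le _ _
      _ = ℙ {ω | ∀ i, X i ω ≤ Finv i (u i)} := by
          rw [measure_iUnion_null hDnull, add_zero]
  · intro ω hω i
    have : F i (X i ω) ≤ F i (a i) := hFmono i (hω i)
    rw [haF i] at this
    exact this
end

section
/- Let K be a real symmetric positive definite n×n matrix, let W̃ = diag(w₁,…,wₙ) with wᵢ ≥ 0 for all i, set W̃^{1/2} = diag(√w₁,…,√wₙ), B = I + W̃^{1/2} K W̃^{1/2}, and Q = W̃^{1/2} B⁻¹ W̃^{1/2}. Then for any vectors f, r ∈ ℝⁿ, the Newton update f^{new} = f − (−W̃ − K⁻¹)⁻¹(r − K⁻¹f) satisfies f^{new} = (K⁻¹ + W̃)⁻¹(W̃f + r) = K·a, where b = W̃f + r and a = b − Q K b. -/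
open Matrix

/-- **The modified Newton update in the stable parametrization.**
With `K` real symmetric positive definite, `W̃ = diag(w)` with `wᵢ ≥ 0`,
`B = I + W̃^{1/2} K W̃^{1/2}`, `Q = W̃^{1/2} B⁻¹ W̃^{1/2}`, `b = W̃ f + r` and
`a = b − Q K b`, the Newton update
`f^new = f − (−W̃ − K⁻¹)⁻¹ (r − K⁻¹ f)` satisfies
`f^new = (K⁻¹ + W̃)⁻¹ (W̃ f + r) = K a`. -/
theorem newton_update_stable
    {n : ℕ} (K : Matrix (Fin n) (Fin n) ℝ) (hK : K.PosDef)
    (w : Fin n → ℝ) (hw : ∀ i, 0 ≤ w i)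
    (Wh B Q : Matrix (Fin n) (Fin n) ℝ)
    (hWh : Wh = Matrix.diagonal fun i => Real.sqrt (w i))
    (hB : B = 1 + Wh * K * Wh)
    (hQ : Q = Wh * B⁻¹ * Wh)
    (f r b a : Fin n → ℝ)
    (hb : b = Matrix.diagonal w *ᵥ f + r)
    (ha : a = b - Q *ᵥ (K *ᵥ b)) :
    f - (-(Matrix.diagonal w) - K⁻¹)⁻¹ *ᵥ (r - K⁻¹ *ᵥ f)
        = (K⁻¹ + Matrix.diagonal w)⁻¹ *ᵥ (Matrix.diagonal w *ᵥ f + r) ∧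
      (K⁻¹ + Matrix.diagonal w)⁻¹ *ᵥ (Matrix.diagonal w *ᵥ f + r) = K *ᵥ a := by
  set W := Matrix.diagonal w with hW
  have hWpsd : W.PosSemidef := Matrix.posSemidef_diagonal_iff.2 (by simpa using hw)
  have hWhW : Wh * Wh = W := by
    rw [hWh, Matrix.diagonal_mul_diagonal]
    exact congrArg _ (funext fun i => Real.mul_self_sqrt (hw i))
  have hWhH : Whᴴ = Wh := by
    rw [hWh]; simp [Matrix.diagonal_conjTranspose]
  have hPSD : (Wh * K * Wh).PosSemidef := by
    have := hK.posSemidef.conjTranspose_mul_mul_same Wh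
    rwa [hWhH] at this
  have hBpd : B.PosDef := by
    rw [hB]
    exact Matrix.PosDef.add_posSemidef (Matrix.PosDef.one) hPSD
  have hM : (K⁻¹ + W).PosDef := hK.inv.add_posSemidef hWpsd
  have hBu : IsUnit B := hBpd.isUnit
  have hMu : IsUnit (K⁻¹ + W) := hM.isUnit
  have hKu : IsUnit K := hK.isUnit
  -- key matrix inversion lemma
  have hinv : (K⁻¹ + W)⁻¹ = K - K * Q * K := by
    apply Matrix.inv_eq_right_inv
    have hKiK : K⁻¹ * K = 1 := Matrix.nonsing_inv_mul K (Matrix.isUnit_iff_isUnit_det _ |>.1 hKu)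
    have hBBi : B * B⁻¹ = 1 := Matrix.mul_nonsing_inv B (Matrix.isUnit_iff_isUnit_det _ |>.1 hBu)
    have key : (1 + W * K) * Q = Wh * B⁻¹ * Wh + Wh * (Wh * K * Wh) * B⁻¹ * Wh := by
      rw [hQ, ← hWhW]; noncomm_ring
    have key2 : (1 + W * K) * Q = W := by
      rw [key]
      have : Wh * B⁻¹ * Wh + Wh * (Wh * K * Wh) * B⁻¹ * Wh
          = Wh * ((1 + Wh * K * Wh) * B⁻¹) * Wh := by noncomm_ring
      rw [this, ← hB, hBBi, Matrix.mul_one, hWhW]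
    have e1 : (K⁻¹ + W) * (K - K * Q * K)
        = K⁻¹ * K + W * K - (K⁻¹ * K * Q * K + W * K * Q * K) := by noncomm_ring
    have e2 : (1 : Matrix (Fin n) (Fin n) ℝ) * Q * K + W * K * Q * K
        = ((1 + W * K) * Q) * K := by noncomm_ring
    rw [e1, hKiK, e2, key2]
    abel
  have hMinv : (K⁻¹ + W) * (K⁻¹ + W)⁻¹ = 1 :=
    Matrix.mul_nonsing_inv _ (Matrix.isUnit_iff_isUnit_det _ |>.1 hMu)
  constructor
  · have hneg : (-(W) - K⁻¹)⁻¹ = -((K⁻¹ + W)⁻¹) := by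
      have h1 : -(W) - K⁻¹ = -(K⁻¹ + W) := by noncomm_ring
      rw [h1]
      apply Matrix.inv_eq_right_inv
      rw [neg_mul_neg, hMinv]
    rw [hneg, Matrix.neg_mulVec, sub_neg_eq_add]
    have hf : f = (K⁻¹ + W)⁻¹ *ᵥ ((K⁻¹ + W) *ᵥ f) := by
      rw [Matrix.mulVec_mulVec,
        Matrix.nonsing_inv_mul _ (Matrix.isUnit_iff_isUnit_det _ |>.1 hMu), Matrix.one_mulVec]
    nth_rewrite 1 [hf]
    rw [← Matrix.mulVec_add, Matrix.add_mulVec]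
    abel
  · rw [← hb, ha]
    rw [hinv]
    rw [Matrix.sub_mulVec, Matrix.mulVec_sub]
    congr 1
    rw [Matrix.mulVec_mulVec, Matrix.mulVec_mulVec, Matrix.mul_assoc]
end
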